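/- Let g, γ ∈ W(ℝ^d) and a, b > 0. Define G_{a,b;n}(x) = ∑_{k∈ℤ^d} ḡ(x − n/b − ak) γ(x − ak) for n ∈ ℤ^d. Then ∑_{n∈ℤ^d} ‖G_{a,b;n}‖_∞ ≤ (1 + 1/a)^d (2 + 2b)^d ‖g‖_{W(ℝ^d)} ‖γ‖_{W(ℝ^d)}. -/

import Mathlib

open MeasureTheory ENNReal

noncomputable section

/-- Coercion of a lattice point `k ∈ ℤ^d` to `ℝ^d`. -/
def zVec {d : ℕ} (k : Fin d → ℤ) : Fin d → ℝ := fun i => (k i : ℝ)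

/-- The unit cube `Q = [0,1)^d` translated by `k ∈ ℤ^d`. -/
def block (d : ℕ) (k : Fin d → ℤ) : Set (Fin d → ℝ) :=
  {x | ∀ i, (k i : ℝ) ≤ x i ∧ x i < (k i : ℝ) + 1}

/-- `‖f · T_k χ_Q‖_p`, the local `L^p` norm of `f` on the cube `k + Q`. -/
def blockNorm (d : ℕ) (p : ℝ≥0∞) (f : (Fin d → ℝ) → ℂ) (k : Fin d → ℤ) : ℝ≥0∞ :=
  eLpNorm ((block d k).indicator f) p volume

/-- The Wiener space norm `‖f‖_{W(ℝ^d)} = ∑_{k∈ℤ^d} ‖f·T_k χ_Q‖_∞`. -/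
def wienerNorm (d : ℕ) (f : (Fin d → ℝ) → ℂ) : ℝ≥0∞ :=
  ∑' k : Fin d → ℤ, blockNorm d ∞ f k

/-- The Wiener amalgam norm `‖f‖_{W(L^p,ℓ^q)} = (∑_{k∈ℤ^d} ‖f·T_k χ_Q‖_p^q)^{1/q}`,
with the supremum in place of the sum when `q = ∞`. -/
def amalgamNorm (d : ℕ) (p q : ℝ≥0∞) (f : (Fin d → ℝ) → ℂ) : ℝ≥0∞ :=
  if q = ∞ then ⨆ k : Fin d → ℤ, blockNorm d p f k
  else (∑' k : Fin d → ℤ, blockNorm d p f k ^ q.toReal) ^ (1 / q.toReal)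

/-- The function `G_{a,b;n}(x) = ∑_{k∈ℤ^d} ḡ(x − n/b − ak) γ(x − ak)`. -/
def Gabn {d : ℕ} (g γ : (Fin d → ℝ) → ℂ) (a b : ℝ) (n : Fin d → ℤ) (x : Fin d → ℝ) : ℂ :=
  ∑' k : Fin d → ℤ,
    (starRingEnd ℂ) (g (x - b⁻¹ • zVec n - a • zVec k)) * γ (x - a • zVec k)

namespace Stmt6Aux

/-- tsum of ones over a finite type is its cardinality. -/
lemma tsum_one_eq (ι : Type*) [Finite ι] : ∑' _ : ι, (1:ℝ≥0∞) = Nat.card ι := by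
  haveI := Fintype.ofFinite ι
  rw [tsum_fintype]
  simp [Nat.card_eq_fintype_card]

/-- Integers in a half-open interval `(α, α+L]`: finite with count at most `L+1`. -/
lemma interval_count (α L : ℝ) (hL : 0 ≤ L) :
    Finite {j : ℤ // α < (j:ℝ) ∧ (j:ℝ) ≤ α + L} ∧
      (Nat.card {j : ℤ // α < (j:ℝ) ∧ (j:ℝ) ≤ α + L} : ℝ) ≤ L + 1 := by
  set S : Set ℤ := {j : ℤ | α < (j:ℝ) ∧ (j:ℝ) ≤ α + L} with hS
  have hsub : S ⊆ (Finset.Icc (⌊α⌋+1) ⌊α+L⌋ : Finset ℤ) := by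
    rintro j ⟨h1, h2⟩
    simp only [Finset.coe_Icc, Set.mem_Icc]
    exact ⟨Int.add_one_le_iff.2 (Int.floor_lt.2 h1), Int.le_floor.2 h2⟩
  have hfin : S.Finite := (Finset.finite_toSet _).subset hsub
  refine ⟨hfin, ?_⟩
  have h1 : Nat.card S = S.ncard := Nat.card_coe_set_eq S
  have h2 : S.ncard ≤ (Finset.Icc (⌊α⌋+1) ⌊α+L⌋).card := by
    rw [← Set.ncard_coe_finset]
    exact Set.ncard_le_ncard hsub (Finset.finite_toSet _)
  have h3 : (Finset.Icc (⌊α⌋+1) ⌊α+L⌋).card = (⌊α+L⌋ + 1 - (⌊α⌋+1)).toNat := Int.card_Icc _ _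
  have key : ((⌊α+L⌋ + 1 - (⌊α⌋+1)).toNat : ℝ) ≤ L + 1 := by
    rcases le_or_gt (⌊α+L⌋ + 1 - (⌊α⌋+1)) 0 with h | h
    · rw [Int.toNat_of_nonpos h]
      push_cast
      linarith
    · have h6 : ((⌊α+L⌋ + 1 - (⌊α⌋+1)).toNat : ℝ) = ((⌊α+L⌋ + 1 - (⌊α⌋+1) : ℤ) : ℝ) := by
        exact_mod_cast Int.toNat_of_nonneg h.le
      rw [h6]
      push_cast
      have h4 := Int.floor_le (α+L)
      have h5 := Int.sub_one_lt_floor α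
      linarith
  calc (Nat.card S : ℝ) ≤ ((Finset.Icc (⌊α⌋+1) ⌊α+L⌋).card : ℝ) := by
        exact_mod_cast h1 ▸ Nat.cast_le.2 h2
    _ ≤ L + 1 := h3 ▸ key

/-- Box of lattice points: tsum of ones bounded by `c^d`. -/
lemma box_count {d : ℕ} (S : Fin d → Set ℤ) {c : ℝ} (hc0 : 0 ≤ c)
    (h : ∀ i, Finite (S i) ∧ (Nat.card (S i) : ℝ) ≤ c) :
    ∑' _ : {k : Fin d → ℤ // ∀ i, k i ∈ S i}, (1:ℝ≥0∞) ≤ ENNReal.ofReal (c ^ d) := by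
  haveI : ∀ i, Finite (S i) := fun i => (h i).1
  have e : {k : Fin d → ℤ // ∀ i, k i ∈ S i} ≃ ∀ i, S i := Equiv.subtypePiEquivPi
  haveI : Finite {k : Fin d → ℤ // ∀ i, k i ∈ S i} := Finite.of_equiv _ e.symm
  rw [tsum_one_eq]
  have hcard : Nat.card {k : Fin d → ℤ // ∀ i, k i ∈ S i} = ∏ i, Nat.card (S i) := by
    rw [Nat.card_congr e, Nat.card_pi]
  have hreal : ((∏ i, Nat.card (S i) : ℕ) : ℝ) ≤ c ^ d := by
    push_cast
    calc ∏ i : Fin d, (Nat.card (S i) : ℝ) ≤ ∏ _i : Fin d, c :=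
          Finset.prod_le_prod (fun i _ => Nat.cast_nonneg _) (fun i _ => (h i).2)
      _ = c ^ d := by simp
  rw [hcard, ← ENNReal.ofReal_natCast]
  exact ENNReal.ofReal_le_ofReal hreal

/-- Summing a composition with a map whose fibers have at most `N` elements. -/
lemma tsum_comp_le {α β : Type*} (φ : α → β) (g : β → ℝ≥0∞) (N : ℝ≥0∞)
    (h : ∀ p : β, ∑' _ : {k : α // φ k = p}, (1:ℝ≥0∞) ≤ N) :
    ∑' k, g (φ k) ≤ N * ∑' p, g p := by
  have h1 : ∑' k, g (φ k)
      = ∑' q : Σ y : β, {x // φ x = y}, g (φ ((Equiv.sigmaFiberEquiv φ) q)) :=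
    ((Equiv.sigmaFiberEquiv φ).tsum_eq _).symm
  rw [h1, ENNReal.tsum_sigma']
  have h2 : ∀ p : β,
      ∑' k : {x // φ x = p}, g (φ ((Equiv.sigmaFiberEquiv φ) ⟨p, k⟩)) ≤ N * g p := by
    intro p
    have heq : ∀ k : {x // φ x = p}, g (φ ((Equiv.sigmaFiberEquiv φ) ⟨p, k⟩)) = g p * 1 := by
      intro k; rw [mul_one]; congr 1; simpa [Equiv.sigmaFiberEquiv] using k.2
    rw [tsum_congr heq, ENNReal.tsum_mul_left, mul_comm]
    exact mul_le_mul_left (h p) _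
  calc ∑' (p : β), ∑' (k : {x // φ x = p}), g (φ ((Equiv.sigmaFiberEquiv φ) ⟨p, k⟩))
      ≤ ∑' p, N * g p := ENNReal.tsum_le_tsum h2
    _ = N * ∑' p, g p := ENNReal.tsum_mul_left

/-- The extended norm of a tsum is at most the tsum of extended norms. -/
lemma enorm_tsum_le {ι : Type*} (f : ι → ℂ) :
    (‖∑' i, f i‖₊ : ℝ≥0∞) ≤ ∑' i, (‖f i‖₊ : ℝ≥0∞) := by
  by_cases h : Summable fun i => ‖f i‖₊
  · rw [← ENNReal.coe_tsum h]
    exact_mod_cast nnnorm_tsum_le h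
  · have : ∑' i, (‖f i‖₊ : ℝ≥0∞) = ⊤ := by
      by_contra hne
      exact h (ENNReal.tsum_coe_ne_top_iff_summable.1 hne)
    rw [this]; exact le_top

/-- The block containing a point. -/
def blockOf {d : ℕ} (y : Fin d → ℝ) : Fin d → ℤ := fun i => ⌊y i⌋

lemma mem_block_blockOf {d : ℕ} (y : Fin d → ℝ) : y ∈ block d (blockOf y) :=
  fun _ => ⟨Int.floor_le _, Int.lt_floor_add_one _⟩

lemma blockOf_apply {d : ℕ} (y : Fin d → ℝ) (i : Fin d) : blockOf y i = ⌊y i⌋ := rfl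

/-- Almost everywhere, `‖f y‖` is bounded by the block norm of the block containing `y`. -/
lemma ae_enorm_le {d : ℕ} (f : (Fin d → ℝ) → ℂ) :
    ∀ᵐ y : (Fin d → ℝ), (‖f y‖₊ : ℝ≥0∞) ≤ blockNorm d ∞ f (blockOf y) := by
  have h : ∀ m : Fin d → ℤ, ∀ᵐ y : (Fin d → ℝ),
      y ∈ block d m → (‖f y‖₊ : ℝ≥0∞) ≤ blockNorm d ∞ f m := by
    intro m
    have hb : blockNorm d ∞ f m
        = essSup (fun y => (‖(block d m).indicator f y‖₊ : ℝ≥0∞)) volume := by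
      rw [blockNorm, eLpNorm_exponent_top, eLpNormEssSup]
      rfl
    filter_upwards [ae_le_essSup
      (fun y => (‖(block d m).indicator f y‖₊ : ℝ≥0∞))] with y hy hmem
    rw [hb]
    rwa [Set.indicator_of_mem hmem] at hy
  have hall : ∀ᵐ y : (Fin d → ℝ), ∀ m : Fin d → ℤ,
      y ∈ block d m → (‖f y‖₊ : ℝ≥0∞) ≤ blockNorm d ∞ f m := ae_all_iff.2 h
  filter_upwards [hall] with y hy
  exact hy (blockOf y) (mem_block_blockOf y)

/-- Translated version of `ae_enorm_le`. -/
lemma ae_enorm_le_sub {d : ℕ} (f : (Fin d → ℝ) → ℂ) (v : Fin d → ℝ) :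
    ∀ᵐ x : (Fin d → ℝ), (‖f (x - v)‖₊ : ℝ≥0∞) ≤ blockNorm d ∞ f (blockOf (x - v)) :=
  ((measurePreserving_sub_right volume v).quasiMeasurePreserving).ae (ae_enorm_le f)

end Stmt6Aux

open Stmt6Aux

theorem stmt6 {d : ℕ} (g γ : (Fin d → ℝ) → ℂ) (hg : Measurable g) (hγ : Measurable γ)
    (hWg : wienerNorm d g < ∞) (hWγ : wienerNorm d γ < ∞)
    (a b : ℝ) (ha : 0 < a) (hb : 0 < b) :
    ∑' n : Fin d → ℤ, eLpNorm (Gabn g γ a b n) ∞ volume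
      ≤ ENNReal.ofReal ((1 + 1 / a) ^ d * (2 + 2 * b) ^ d)
          * wienerNorm d g * wienerNorm d γ := by
  classical
  set A : (Fin d → ℤ) → ℝ≥0∞ := fun m => blockNorm d ∞ γ m with hA
  set B : (Fin d → ℤ) → ℝ≥0∞ := fun l => blockNorm d ∞ g l with hB
  set adj : (Fin d → ℤ) → (Fin d → ℤ) → (Fin d → ℤ) → Prop :=
    fun n m l => ∀ i, (m i:ℝ) - b⁻¹ * n i - 1 < l i ∧ (l i:ℝ) < m i - b⁻¹ * n i + 1 with hadj
  set T : (Fin d → ℤ) → ℝ≥0∞ :=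
    fun n => ∑' m, A m * ∑' l, (if adj n m l then B l else 0) with hT
  set Na := ENNReal.ofReal ((1 + 1/a) ^ d) with hNa
  set Nb := ENNReal.ofReal ((2 + 2*b) ^ d) with hNb
  have happ1 : ∀ (x : Fin d → ℝ) (k : Fin d → ℤ) (i : Fin d),
      (x - a • zVec k) i = x i - a * (k i : ℝ) := by
    intro x k i; simp [zVec]
  have happ2 : ∀ (x : Fin d → ℝ) (n k : Fin d → ℤ) (i : Fin d),
      (x - b⁻¹ • zVec n - a • zVec k) i = x i - b⁻¹ * (n i : ℝ) - a * (k i : ℝ) := by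
    intro x n k i; simp [zVec]
  have happ0 : ∀ (x : Fin d → ℝ) (n : Fin d → ℤ) (i : Fin d),
      (x - b⁻¹ • zVec n) i = x i - b⁻¹ * (n i : ℝ) := by
    intro x n i; simp [zVec]
  -- Step 1 : uniform bound on each essential supremum
  have step1 : ∀ n, eLpNorm (Gabn g γ a b n) ∞ volume ≤ Na * T n := by
    intro n
    rw [eLpNorm_exponent_top, eLpNormEssSup]
    refine essSup_le_of_ae_le _ ?_
    have hae : ∀ᵐ x : Fin d → ℝ, ∀ k : Fin d → ℤ,
        (‖γ (x - a • zVec k)‖₊ : ℝ≥0∞) ≤ A (blockOf (x - a • zVec k)) ∧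
        (‖g (x - b⁻¹ • zVec n - a • zVec k)‖₊ : ℝ≥0∞)
          ≤ B (blockOf (x - b⁻¹ • zVec n - a • zVec k)) := by
      rw [ae_all_iff]
      intro k
      filter_upwards [ae_enorm_le_sub γ (a • zVec k),
        ae_enorm_le_sub g (b⁻¹ • zVec n + a • zVec k)] with x h1 h2
      refine ⟨h1, ?_⟩
      have hre : x - b⁻¹ • zVec n - a • zVec k = x - (b⁻¹ • zVec n + a • zVec k) := by
        rw [sub_sub]
      rw [hre]
      exact h2
    filter_upwards [hae] with x hx
    have hadjk : ∀ (k : Fin d → ℤ),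
        adj n (blockOf (x - a • zVec k)) (blockOf (x - b⁻¹ • zVec n - a • zVec k)) := by
      intro k
      rw [hadj]
      intro i
      simp only [blockOf_apply, happ1, happ2, happ0]
      have f1 := Int.floor_le (x i - a * (k i:ℝ))
      have f2 := Int.lt_floor_add_one (x i - a * (k i:ℝ))
      have f3 := Int.floor_le (x i - b⁻¹ * (n i:ℝ) - a * (k i:ℝ))
      have f4 := Int.sub_one_lt_floor (x i - b⁻¹ * (n i:ℝ) - a * (k i:ℝ))
      constructor <;> linarith
    calc (‖Gabn g γ a b n x‖₊ : ℝ≥0∞)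
        ≤ ∑' k : Fin d → ℤ,
            (‖(starRingEnd ℂ) (g (x - b⁻¹ • zVec n - a • zVec k)) * γ (x - a • zVec k)‖₊ : ℝ≥0∞) :=
          enorm_tsum_le _
      _ = ∑' k : Fin d → ℤ, (‖g (x - b⁻¹ • zVec n - a • zVec k)‖₊ : ℝ≥0∞)
            * (‖γ (x - a • zVec k)‖₊ : ℝ≥0∞) := by
          refine tsum_congr fun k => ?_
          rw [nnnorm_mul, RCLike.nnnorm_conj, ENNReal.coe_mul]
      _ ≤ ∑' k : Fin d → ℤ, B (blockOf (x - b⁻¹ • zVec n - a • zVec k))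
            * A (blockOf (x - a • zVec k)) :=
          ENNReal.tsum_le_tsum fun k => mul_le_mul' (hx k).2 (hx k).1
      _ ≤ ∑' k : Fin d → ℤ, (A (blockOf (x - a • zVec k))
            * ∑' l, (if adj n (blockOf (x - a • zVec k)) l then B l else 0)) := by
          refine ENNReal.tsum_le_tsum fun k => ?_
          rw [mul_comm]
          refine mul_le_mul_right ?_ _
          calc B (blockOf (x - b⁻¹ • zVec n - a • zVec k))
              = (if adj n (blockOf (x - a • zVec k)) (blockOf (x - b⁻¹ • zVec n - a • zVec k))
                  then B (blockOf (x - b⁻¹ • zVec n - a • zVec k)) else 0) := by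
                rw [if_pos (hadjk k)]
            _ ≤ ∑' l, (if adj n (blockOf (x - a • zVec k)) l then B l else 0) :=
                ENNReal.le_tsum _
      _ ≤ Na * T n := by
          simp only [hT]
          refine tsum_comp_le (fun k => blockOf (x - a • zVec k))
            (fun m => A m * ∑' l, (if adj n m l then B l else 0)) Na ?_
          intro m
          set S : Fin d → Set ℤ := fun i =>
            {j : ℤ | (x i - m i - 1)/a < (j:ℝ) ∧ (j:ℝ) ≤ (x i - m i - 1)/a + 1/a} with hSdef
          have hchar : ∀ (j : ℤ) (i : Fin d), (j ∈ S i) ↔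
              ((m i:ℝ) ≤ x i - a * j ∧ x i - a * j < (m i:ℝ) + 1) := by
            intro j i
            simp only [hSdef, Set.mem_setOf_eq]
            have hsum : (x i - (m i:ℝ) - 1)/a + 1/a = (x i - (m i:ℝ))/a := by
              field_simp
              ring
            rw [hsum, div_lt_iff₀ ha, le_div_iff₀ ha]
            constructor <;> rintro ⟨h1, h2⟩ <;> constructor <;> nlinarith
          have hiff : ∀ k : Fin d → ℤ,
              ((fun k => blockOf (x - a • zVec k)) k = m) ↔ (∀ i, k i ∈ S i) := by
            intro k
            rw [funext_iff]
            refine forall_congr' fun i => ?_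
            simp only [blockOf_apply, happ1]
            exact Int.floor_eq_iff.trans (hchar (k i) i).symm
          have htrans : ∑' _ : {k : Fin d → ℤ // (fun k => blockOf (x - a • zVec k)) k = m},
              (1:ℝ≥0∞) = ∑' _ : {k : Fin d → ℤ // ∀ i, k i ∈ S i}, (1:ℝ≥0∞) :=
            (Equiv.subtypeEquivRight hiff).tsum_eq (fun _ => (1:ℝ≥0∞))
          rw [htrans, hNa]
          refine box_count S (by positivity) fun i => ?_
          obtain ⟨hf, hc⟩ := interval_count ((x i - m i - 1)/a) (1/a) (by positivity)
          have hf' : Finite (S i) := hf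
          have hc' : (Nat.card (S i) : ℝ) ≤ 1/a + 1 := hc
          exact ⟨hf', by linarith⟩
  -- Step 2 : summing the combinatorial bound
  have step2 : ∑' n : Fin d → ℤ, T n ≤ Nb * wienerNorm d g * wienerNorm d γ := by
    have hswap : ∑' n : Fin d → ℤ, T n
        = ∑' m : Fin d → ℤ, ∑' l : Fin d → ℤ, ∑' n : Fin d → ℤ,
            A m * (if adj n m l then B l else 0) := by
      simp only [hT]
      have h1 : ∀ n : Fin d → ℤ, (∑' m, A m * ∑' l, (if adj n m l then B l else 0))
          = ∑' (m : Fin d → ℤ) (l : Fin d → ℤ), A m * (if adj n m l then B l else 0) := by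
        intro n
        exact tsum_congr fun m => ENNReal.tsum_mul_left.symm
      rw [tsum_congr h1, ENNReal.tsum_comm]
      exact tsum_congr fun m => ENNReal.tsum_comm
    rw [hswap]
    have hinner : ∀ m l : Fin d → ℤ,
        ∑' n : Fin d → ℤ, A m * (if adj n m l then B l else 0) ≤ A m * B l * Nb := by
      intro m l
      have h1 : ∀ n, A m * (if adj n m l then B l else 0)
          = A m * B l * (if adj n m l then (1:ℝ≥0∞) else 0) := by
        intro n; split_ifs <;> simp
      rw [tsum_congr h1, ENNReal.tsum_mul_left]
      refine mul_le_mul_right ?_ _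
      set S : Fin d → Set ℤ := fun i =>
        {j : ℤ | b * ((m i:ℝ) - l i - 1) < (j:ℝ) ∧ (j:ℝ) ≤ b * ((m i:ℝ) - l i - 1) + 2*b}
        with hSdef
      have hbi : b * b⁻¹ = 1 := mul_inv_cancel₀ hb.ne'
      have himp : ∀ n : Fin d → ℤ, adj n m l → ∀ i, n i ∈ S i := by
        intro n hn i
        rw [hadj] at hn
        obtain ⟨h1', h2'⟩ := hn i
        simp only [hSdef, Set.mem_setOf_eq]
        have e1 : (m i:ℝ) - l i - 1 < b⁻¹ * n i := by linarith
        have e2 : b⁻¹ * (n i:ℝ) < (m i:ℝ) - l i + 1 := by linarith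
        constructor
        · have h3 := mul_lt_mul_of_pos_left e1 hb
          calc b * ((m i:ℝ) - l i - 1) < b * (b⁻¹ * n i) := h3
            _ = n i := by rw [← mul_assoc, hbi, one_mul]
        · have h3 := mul_lt_mul_of_pos_left e2 hb
          have h4 : (n i:ℝ) < b * ((m i:ℝ) - l i + 1) := by
            rw [← mul_assoc, hbi, one_mul] at h3
            exact h3
          have h5 : b * ((m i:ℝ) - l i + 1) = b * ((m i:ℝ) - l i - 1) + 2*b := by ring
          linarith
      have hle1 : ∑' n : Fin d → ℤ, (if adj n m l then (1:ℝ≥0∞) else 0)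
          ≤ ∑' n : Fin d → ℤ, (if (∀ i, n i ∈ S i) then (1:ℝ≥0∞) else 0) := by
        refine ENNReal.tsum_le_tsum fun n => ?_
        split_ifs with h1' h2'
        · exact le_refl _
        · exact absurd (himp n h1') h2'
        · exact zero_le
        · exact le_refl _
      have heq2 : ∑' n : Fin d → ℤ, (if (∀ i, n i ∈ S i) then (1:ℝ≥0∞) else 0)
          = ∑' _ : {n : Fin d → ℤ // ∀ i, n i ∈ S i}, (1:ℝ≥0∞) := by
        have hts := tsum_subtype (f := fun _ : (Fin d → ℤ) => (1:ℝ≥0∞))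
          {n : Fin d → ℤ | ∀ i, n i ∈ S i}
        rw [show (∑' _ : {n : Fin d → ℤ // ∀ i, n i ∈ S i}, (1:ℝ≥0∞))
            = ∑' _x : ({n : Fin d → ℤ | ∀ i, n i ∈ S i} : Set (Fin d → ℤ)), (1:ℝ≥0∞) from rfl,
          hts]
        refine tsum_congr fun n => ?_
        simp [Set.indicator_apply]
      refine le_trans hle1 ?_
      rw [heq2, hNb]
      refine box_count S (by positivity) fun i => ?_
      obtain ⟨hf, hc⟩ := interval_count (b * ((m i:ℝ) - l i - 1)) (2*b) (by positivity)
      have hf' : Finite (S i) := hf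
      have hc' : (Nat.card (S i) : ℝ) ≤ 2*b + 1 := hc
      exact ⟨hf', by linarith⟩
    calc ∑' m : Fin d → ℤ, ∑' l : Fin d → ℤ, ∑' n : Fin d → ℤ,
            A m * (if adj n m l then B l else 0)
        ≤ ∑' m : Fin d → ℤ, ∑' l : Fin d → ℤ, A m * B l * Nb :=
          ENNReal.tsum_le_tsum fun m => ENNReal.tsum_le_tsum fun l => hinner m l
      _ = Nb * wienerNorm d g * wienerNorm d γ := by
          have h1 : ∀ m : Fin d → ℤ, ∑' l : Fin d → ℤ, A m * B l * Nb
              = (Nb * ∑' l : Fin d → ℤ, B l) * A m := by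
            intro m
            have h2 : ∀ l, A m * B l * Nb = (Nb * A m) * B l := fun l => by ring
            rw [tsum_congr h2, ENNReal.tsum_mul_left]
            ring
          rw [tsum_congr h1, ENNReal.tsum_mul_left]
          have hWg' : ∑' l : Fin d → ℤ, B l = wienerNorm d g := rfl
          have hWγ' : ∑' m' : Fin d → ℤ, A m' = wienerNorm d γ := rfl
          rw [hWg', hWγ']
  calc ∑' n : Fin d → ℤ, eLpNorm (Gabn g γ a b n) ∞ volume
      ≤ ∑' n : Fin d → ℤ, Na * T n := ENNReal.tsum_le_tsum step1
    _ = Na * ∑' n : Fin d → ℤ, T n := ENNReal.tsum_mul_left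
    _ ≤ Na * (Nb * wienerNorm d g * wienerNorm d γ) := mul_le_mul_right step2 _
    _ = ENNReal.ofReal ((1 + 1 / a) ^ d * (2 + 2 * b) ^ d)
          * wienerNorm d g * wienerNorm d γ := by
        rw [hNa, hNb, ENNReal.ofReal_mul (by positivity)]
        ring
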